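/- Let (X, μ) be a finite measure space, γ ∈ [1, ∞), and 0 < c_* < c^*, 0 < ρ̲ ≤ R, S > 0 real numbers. Let ρ, θ : X → ℝ be measurable with ρ̲ ≤ ρ ≤ R and c_* ≤ θ ≤ c^* almost everywhere, and let (ρ_n)ₙ and (θ_n)ₙ be sequences of measurable functions with ρ_n ≥ 0, ∫ ρ_n dμ ≤ S, and c_* ≤ θ_n ≤ c^* almost everywhere for every n. Assume that ‖ρ_n θ_n − ρθ‖_{L^γ(μ)} → 0 and ∫ ρ_n·(θ_n − θ)² dμ → 0 as n → ∞. Then ‖ρ_n − ρ‖_{L^γ(μ)} → 0 and, for every p ∈ [1, ∞), ‖θ_n − θ‖_{L^p(μ)} → 0 as n → ∞. -/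

import Mathlib

open MeasureTheory Filter
open scoped ENNReal

set_option maxHeartbeats 1000000 in
/-- Abstract measure-theoretic core of the strong-convergence theorem: convergence of
`ρ_n θ_n` in L^γ and vanishing of the weighted temperature error upgrade to strong
convergence `ρ_n → ρ` in L^γ and `θ_n → θ` in every L^p, p < ∞. -/
theorem strong_convergence_density_temperature
    {X : Type*} [MeasurableSpace X] (μ : Measure X) [IsFiniteMeasure μ]
    (γ cs cS ρlb R S : ℝ)
    (hγ : 1 ≤ γ) (hcs : 0 < cs) (hcc : cs < cS) (hρlb : 0 < ρlb) (hρR : ρlb ≤ R) (hS : 0 < S)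
    (ρ θ : X → ℝ) (ρn θn : ℕ → X → ℝ)
    (hρm : Measurable ρ) (hθm : Measurable θ)
    (hρnm : ∀ n, Measurable (ρn n)) (hθnm : ∀ n, Measurable (θn n))
    (hρ : ∀ᵐ x ∂μ, ρlb ≤ ρ x ∧ ρ x ≤ R)
    (hθ : ∀ᵐ x ∂μ, cs ≤ θ x ∧ θ x ≤ cS)
    (hρn : ∀ n, ∀ᵐ x ∂μ, 0 ≤ ρn n x)
    (hρnint : ∀ n, Integrable (ρn n) μ)
    (hρnS : ∀ n, ∫ x, ρn n x ∂μ ≤ S)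
    (hθn : ∀ n, ∀ᵐ x ∂μ, cs ≤ θn n x ∧ θn n x ≤ cS)
    (h1 : Tendsto (fun n =>
        eLpNorm (fun x => ρn n x * θn n x - ρ x * θ x) (ENNReal.ofReal γ) μ) atTop (nhds 0))
    (h2 : Tendsto (fun n => ∫ x, ρn n x * (θn n x - θ x) ^ 2 ∂μ) atTop (nhds 0)) :
    Tendsto (fun n => eLpNorm (fun x => ρn n x - ρ x) (ENNReal.ofReal γ) μ) atTop (nhds 0) ∧
    ∀ p : ℝ, 1 ≤ p →
      Tendsto (fun n => eLpNorm (fun x => θn n x - θ x) (ENNReal.ofReal p) μ)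
        atTop (nhds 0) := by
  have hC : 0 < cS - cs := sub_pos.mpr hcc
  have hR0 : 0 < R := lt_of_lt_of_le hρlb hρR
  have hγ0 : (0:ℝ) < γ := by linarith
  have hγ1 : (1:ℝ≥0∞) ≤ ENNReal.ofReal γ := ENNReal.one_le_ofReal.mpr hγ
  -- a.e. bound on |θn - θ|
  have hδb : ∀ n, ∀ᵐ x ∂μ, |θn n x - θ x| ≤ cS - cs := by
    intro n
    filter_upwards [hθ, hθn n] with x h1 h2
    rw [abs_sub_le_iff]
    constructor <;> [linarith [h1.1, h2.2]; linarith [h1.2, h2.1]]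
  -- integrability facts
  have intρ : Integrable ρ μ := by
    refine (integrable_const R).mono' hρm.aestronglyMeasurable ?_
    filter_upwards [hρ] with x h
    rw [Real.norm_eq_abs, abs_of_nonneg (le_trans hρlb.le h.1)]
    exact h.2
  have intρθ : Integrable (fun x => ρ x * θ x) μ := by
    refine (integrable_const (R * cS)).mono' (hρm.mul hθm).aestronglyMeasurable ?_
    filter_upwards [hρ, hθ] with x h1 h2
    rw [Real.norm_eq_abs, abs_mul, abs_of_nonneg (le_trans hρlb.le h1.1),
      abs_of_nonneg (le_trans hcs.le h2.1)]
    exact mul_le_mul h1.2 h2.2 (le_trans hcs.le h2.1) hR0.le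
  have intρnθn : ∀ n, Integrable (fun x => ρn n x * θn n x) μ := by
    intro n
    refine ((hρnint n).const_mul cS).mono' ((hρnm n).mul (hθnm n)).aestronglyMeasurable ?_
    filter_upwards [hρn n, hθn n] with x h1 h2
    rw [Real.norm_eq_abs, abs_mul, abs_of_nonneg h1, abs_of_nonneg (le_trans hcs.le h2.1)]
    calc ρn n x * θn n x ≤ ρn n x * cS := mul_le_mul_of_nonneg_left h2.2 h1
      _ = cS * ρn n x := mul_comm _ _
  have intf1 : ∀ n, Integrable (fun x => ρn n x * θn n x - ρ x * θ x) μ :=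
    fun n => (intρnθn n).sub intρθ
  have intρnδ2 : ∀ n, Integrable (fun x => ρn n x * (θn n x - θ x) ^ 2) μ := by
    intro n
    refine ((hρnint n).const_mul ((cS - cs) ^ 2)).mono'
      ((hρnm n).mul (((hθnm n).sub hθm).pow measurable_const)).aestronglyMeasurable ?_
    filter_upwards [hρn n, hδb n] with x h1 h2
    rw [Real.norm_eq_abs, abs_mul, abs_of_nonneg h1, abs_of_nonneg (sq_nonneg _)]
    have hsq : (θn n x - θ x) ^ 2 ≤ (cS - cs) ^ 2 :=
      sq_le_sq' (by linarith [neg_abs_le (θn n x - θ x)]) (le_trans (le_abs_self _) h2)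
    nlinarith [h1, hsq, sq_nonneg (θn n x - θ x)]
  have intρnabsδ : ∀ n, Integrable (fun x => ρn n x * |θn n x - θ x|) μ := by
    intro n
    refine ((hρnint n).const_mul (cS - cs)).mono'
      ((hρnm n).mul ((hθnm n).sub hθm).abs).aestronglyMeasurable ?_
    filter_upwards [hρn n, hδb n] with x h1 h2
    rw [Real.norm_eq_abs, abs_mul, abs_of_nonneg h1, abs_abs]
    nlinarith [h1, h2, abs_nonneg (θn n x - θ x)]
  have intδ2 : ∀ n, Integrable (fun x => (θn n x - θ x) ^ 2) μ := by
    intro n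
    refine (integrable_const ((cS - cs) ^ 2)).mono'
      (((hθnm n).sub hθm).pow measurable_const).aestronglyMeasurable ?_
    filter_upwards [hδb n] with x h2
    rw [Real.norm_eq_abs, abs_of_nonneg (sq_nonneg _)]
    exact sq_le_sq' (by linarith [neg_abs_le (θn n x - θ x)]) (le_trans (le_abs_self _) h2)
  have intdiff : ∀ n, Integrable (fun x => ρn n x - ρ x) μ := fun n => (hρnint n).sub intρ
  have intabsdiff : ∀ n, Integrable (fun x => |ρn n x - ρ x|) μ := fun n => (intdiff n).abs
  -- Step (i): ∫ ρn |θn - θ| → 0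
  have hb : Tendsto (fun n => ∫ x, ρn n x * |θn n x - θ x| ∂μ) atTop (nhds 0) := by
    rw [Metric.tendsto_atTop] at h2 ⊢
    intro ε hε
    obtain ⟨N, hN⟩ := h2 (ε ^ 2 / S) (by positivity)
    refine ⟨N, fun n hn => ?_⟩
    have hE0 : 0 ≤ ∫ x, ρn n x * (θn n x - θ x) ^ 2 ∂μ := by
      refine integral_nonneg_of_ae ?_
      filter_upwards [hρn n] with x h
      positivity
    have hEn : ∫ x, ρn n x * (θn n x - θ x) ^ 2 ∂μ < ε ^ 2 / S := by
      have := hN n hn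
      rwa [Real.dist_eq, sub_zero, abs_of_nonneg hE0] at this
    set t : ℝ := ε / S with ht
    have htpos : 0 < t := by positivity
    have key : ∫ x, ρn n x * |θn n x - θ x| ∂μ ≤
        (∫ x, ρn n x * (θn n x - θ x) ^ 2 ∂μ) / (2 * t) + (t / 2) * ∫ x, ρn n x ∂μ := by
      rw [← integral_div, ← integral_const_mul,
        ← integral_add ((intρnδ2 n).div_const _) ((hρnint n).const_mul _)]
      refine integral_mono_ae (intρnabsδ n)
        (((intρnδ2 n).div_const _).add ((hρnint n).const_mul _)) ?_
      filter_upwards [hρn n] with x h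
      have h1 : 2 * t * (ρn n x * |θn n x - θ x|) ≤
          ρn n x * (θn n x - θ x) ^ 2 + t ^ 2 * ρn n x := by
        nlinarith [mul_nonneg h (sq_nonneg (|θn n x - θ x| - t)), sq_abs (θn n x - θ x)]
      have h2' : ρn n x * |θn n x - θ x| ≤
          (ρn n x * (θn n x - θ x) ^ 2 + t ^ 2 * ρn n x) / (2 * t) := by
        rw [le_div_iff₀ (by positivity)]
        linarith
      calc ρn n x * |θn n x - θ x|
          ≤ (ρn n x * (θn n x - θ x) ^ 2 + t ^ 2 * ρn n x) / (2 * t) := h2'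
        _ = ρn n x * (θn n x - θ x) ^ 2 / (2 * t) + t / 2 * ρn n x := by
            field_simp
    have hb0 : 0 ≤ ∫ x, ρn n x * |θn n x - θ x| ∂μ := by
      refine integral_nonneg_of_ae ?_
      filter_upwards [hρn n] with x h
      positivity
    rw [Real.dist_eq, sub_zero, abs_of_nonneg hb0]
    have hS' : S ≠ 0 := ne_of_gt hS
    have hε' : ε ≠ 0 := ne_of_gt hε
    have e1 : (∫ x, ρn n x * (θn n x - θ x) ^ 2 ∂μ) / (2 * t) < (ε ^ 2 / S) / (2 * t) :=
      div_lt_div_of_pos_right hEn (by positivity)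
    have e2 : (ε ^ 2 / S) / (2 * t) = ε / 2 := by
      rw [ht]; field_simp
    have e3 : (t / 2) * ∫ x, ρn n x ∂μ ≤ (t / 2) * S :=
      mul_le_mul_of_nonneg_left (hρnS n) (by positivity)
    have e4 : (t / 2) * S = ε / 2 := by
      rw [ht]; field_simp
    linarith [key]
  -- Step (ii): ∫ |ρn θn - ρ θ| → 0
  have hd : Tendsto (fun n => ∫ x, |ρn n x * θn n x - ρ x * θ x| ∂μ) atTop (nhds 0) := by
    have hcne : μ Set.univ ^ (1 / (1:ℝ≥0∞).toReal - 1 / (ENNReal.ofReal γ).toReal) ≠ ∞ := by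
      refine ENNReal.rpow_ne_top_of_nonneg ?_ (measure_ne_top μ _)
      rw [ENNReal.toReal_one, ENNReal.toReal_ofReal hγ0.le]
      have h1γ : 1 / γ ≤ 1 := by
        rw [div_le_one hγ0]; exact hγ
      linarith
    have h1' : Tendsto (fun n =>
        eLpNorm (fun x => ρn n x * θn n x - ρ x * θ x) 1 μ) atTop (nhds 0) := by
      have hup : ∀ n, eLpNorm (fun x => ρn n x * θn n x - ρ x * θ x) 1 μ ≤
          eLpNorm (fun x => ρn n x * θn n x - ρ x * θ x) (ENNReal.ofReal γ) μ *
            μ Set.univ ^ (1 / (1:ℝ≥0∞).toReal - 1 / (ENNReal.ofReal γ).toReal) :=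
        fun n => eLpNorm_le_eLpNorm_mul_rpow_measure_univ hγ1 (intf1 n).aestronglyMeasurable
      have hm := ENNReal.Tendsto.mul_const h1 (Or.inr hcne)
      rw [zero_mul] at hm
      exact tendsto_of_tendsto_of_tendsto_of_le_of_le tendsto_const_nhds hm
        (fun n => zero_le) hup
    have heq : ∀ n, ∫ x, |ρn n x * θn n x - ρ x * θ x| ∂μ
        = (eLpNorm (fun x => ρn n x * θn n x - ρ x * θ x) 1 μ).toReal := by
      intro n
      rw [eLpNorm_one_eq_lintegral_enorm,
        ← integral_norm_eq_lintegral_enorm (intf1 n).aestronglyMeasurable]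
      simp_rw [Real.norm_eq_abs]
    simp_rw [heq]
    have := (ENNReal.tendsto_toReal (by simp : (0:ℝ≥0∞) ≠ ∞)).comp h1'
    simpa [Function.comp_def] using this
  -- Step (iii): ∫ |ρn - ρ| → 0
  have hc : Tendsto (fun n => ∫ x, |ρn n x - ρ x| ∂μ) atTop (nhds 0) := by
    have hup : ∀ n, ∫ x, |ρn n x - ρ x| ∂μ ≤
        ((∫ x, |ρn n x * θn n x - ρ x * θ x| ∂μ) + ∫ x, ρn n x * |θn n x - θ x| ∂μ) / cs := by
      intro n
      rw [← integral_add (intf1 n).abs (intρnabsδ n), ← integral_div]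
      refine integral_mono_ae (intabsdiff n)
        (((intf1 n).abs.add (intρnabsδ n)).div_const _) ?_
      filter_upwards [hρn n, hθ, hθn n] with x h0 hx1 hx2
      rw [le_div_iff₀ hcs]
      have key : (ρn n x - ρ x) * θ x =
          (ρn n x * θn n x - ρ x * θ x) + ρn n x * (θ x - θn n x) := by ring
      have c1 : |ρn n x - ρ x| * cs ≤ |ρn n x - ρ x| * θ x :=
        mul_le_mul_of_nonneg_left hx1.1 (abs_nonneg _)
      have c2 : |ρn n x - ρ x| * θ x = |(ρn n x - ρ x) * θ x| := by
        rw [abs_mul, abs_of_nonneg (le_trans hcs.le hx1.1)]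
      have c3 : |(ρn n x - ρ x) * θ x| ≤
          |ρn n x * θn n x - ρ x * θ x| + ρn n x * |θn n x - θ x| := by
        rw [key]
        refine le_trans (abs_add_le _ _) ?_
        have e : |ρn n x * (θ x - θn n x)| = ρn n x * |θn n x - θ x| := by
          rw [abs_mul, abs_of_nonneg h0, abs_sub_comm]
        rw [e]
      linarith
    have hlim : Tendsto (fun n =>
        ((∫ x, |ρn n x * θn n x - ρ x * θ x| ∂μ) + ∫ x, ρn n x * |θn n x - θ x| ∂μ) / cs)
        atTop (nhds 0) := by
      have := (hd.add hb).div_const cs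
      simpa using this
    exact tendsto_of_tendsto_of_tendsto_of_le_of_le tendsto_const_nhds hlim
      (fun n => integral_nonneg fun x => abs_nonneg _) hup
  -- Step (iv): ∫ (θn - θ)^2 → 0
  have ha : Tendsto (fun n => ∫ x, (θn n x - θ x) ^ 2 ∂μ) atTop (nhds 0) := by
    have hup : ∀ n, ∫ x, (θn n x - θ x) ^ 2 ∂μ ≤
        ((∫ x, ρn n x * (θn n x - θ x) ^ 2 ∂μ) +
          (cS - cs) ^ 2 * ∫ x, |ρn n x - ρ x| ∂μ) / ρlb := by
      intro n
      rw [← integral_const_mul, ← integral_add (intρnδ2 n) ((intabsdiff n).const_mul _),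
        ← integral_div]
      refine integral_mono_ae (intδ2 n)
        (((intρnδ2 n).add ((intabsdiff n).const_mul _)).div_const _) ?_
      filter_upwards [hρn n, hρ, hδb n] with x h0 hx1 hx2
      rw [le_div_iff₀ hρlb]
      have e1 : (θn n x - θ x) ^ 2 * ρlb ≤ (θn n x - θ x) ^ 2 * ρ x :=
        mul_le_mul_of_nonneg_left hx1.1 (sq_nonneg _)
      have e2 : (θn n x - θ x) ^ 2 * (ρ x - ρn n x) ≤ (θn n x - θ x) ^ 2 * |ρn n x - ρ x| := by
        refine mul_le_mul_of_nonneg_left ?_ (sq_nonneg _)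
        rw [abs_sub_comm]
        exact le_abs_self _
      have e3 : (θn n x - θ x) ^ 2 * |ρn n x - ρ x| ≤ (cS - cs) ^ 2 * |ρn n x - ρ x| := by
        refine mul_le_mul_of_nonneg_right ?_ (abs_nonneg _)
        exact sq_le_sq' (by linarith [neg_abs_le (θn n x - θ x)]) (le_trans (le_abs_self _) hx2)
      nlinarith [e1, e2, e3]
    have hlim : Tendsto (fun n =>
        ((∫ x, ρn n x * (θn n x - θ x) ^ 2 ∂μ) +
          (cS - cs) ^ 2 * ∫ x, |ρn n x - ρ x| ∂μ) / ρlb) atTop (nhds 0) := by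
      have := (h2.add (hc.const_mul ((cS - cs) ^ 2))).div_const ρlb
      simpa using this
    exact tendsto_of_tendsto_of_tendsto_of_le_of_le tendsto_const_nhds hlim
      (fun n => integral_nonneg fun x => sq_nonneg _) hup
  -- lintegral version
  have hA : Tendsto (fun n => ∫⁻ x, ENNReal.ofReal ((θn n x - θ x) ^ 2) ∂μ)
      atTop (nhds 0) := by
    have heq : ∀ n, ∫⁻ x, ENNReal.ofReal ((θn n x - θ x) ^ 2) ∂μ
        = ENNReal.ofReal (∫ x, (θn n x - θ x) ^ 2 ∂μ) := fun n =>
      (ofReal_integral_eq_lintegral_ofReal (intδ2 n)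
        (Eventually.of_forall fun x => sq_nonneg _)).symm
    simp_rw [heq]
    have := (ENNReal.continuous_ofReal.tendsto 0).comp ha
    simpa [Function.comp_def] using this
  -- Key: θn → θ in every L^q, q ≥ 1
  have hK : ∀ q : ℝ, 1 ≤ q → Tendsto (fun n =>
      eLpNorm (fun x => θn n x - θ x) (ENNReal.ofReal q) μ) atTop (nhds 0) := by
    have key : ∀ q : ℝ, 2 ≤ q → Tendsto (fun n =>
        eLpNorm (fun x => θn n x - θ x) (ENNReal.ofReal q) μ) atTop (nhds 0) := by
      intro q hq2
      have hq0 : (0:ℝ) < q := by linarith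
      have hne0 : ENNReal.ofReal q ≠ 0 := by
        simp only [ne_eq, ENNReal.ofReal_eq_zero, not_le]
        linarith
      have hneT : ENNReal.ofReal q ≠ ∞ := ENNReal.ofReal_ne_top
      have htr : (ENNReal.ofReal q).toReal = q := ENNReal.toReal_ofReal hq0.le
      have hbound : ∀ n, ∫⁻ x, (‖θn n x - θ x‖₊ : ℝ≥0∞) ^ q ∂μ ≤
          ENNReal.ofReal ((cS - cs) ^ (q - 2)) *
            ∫⁻ x, ENNReal.ofReal ((θn n x - θ x) ^ 2) ∂μ := by
        intro n
        rw [← lintegral_const_mul' _ _ ENNReal.ofReal_ne_top]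
        refine lintegral_mono_ae ?_
        filter_upwards [hδb n] with x hx
        rw [← ENNReal.ofReal_mul (Real.rpow_nonneg hC.le _),
          ← enorm_eq_nnnorm, ← ofReal_norm, Real.norm_eq_abs,
          ENNReal.ofReal_rpow_of_nonneg (abs_nonneg _) hq0.le]
        refine ENNReal.ofReal_le_ofReal ?_
        rcases eq_or_lt_of_le (abs_nonneg (θn n x - θ x)) with h0 | hpos
        · rw [← h0, Real.zero_rpow hq0.ne']
          exact mul_nonneg (Real.rpow_nonneg hC.le _) (sq_nonneg _)
        · have e1 : |θn n x - θ x| ^ q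
              = |θn n x - θ x| ^ (q - 2) * |θn n x - θ x| ^ (2:ℝ) := by
            rw [← Real.rpow_add hpos]
            norm_num
          have e2 : |θn n x - θ x| ^ (2:ℝ) = (θn n x - θ x) ^ 2 := by
            rw [show (2:ℝ) = ((2:ℕ):ℝ) by norm_num, Real.rpow_natCast, sq_abs]
          have e3 : |θn n x - θ x| ^ (q - 2) ≤ (cS - cs) ^ (q - 2) :=
            Real.rpow_le_rpow (abs_nonneg _) hx (by linarith)
          rw [e1, e2]
          exact mul_le_mul_of_nonneg_right e3 (sq_nonneg _)
      have hLim : Tendsto (fun n => ∫⁻ x, (‖θn n x - θ x‖₊ : ℝ≥0∞) ^ q ∂μ)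
          atTop (nhds 0) := by
        have hm := ENNReal.Tendsto.const_mul (a := ENNReal.ofReal ((cS - cs) ^ (q - 2))) hA (Or.inr ENNReal.ofReal_ne_top)
        rw [mul_zero] at hm
        exact tendsto_of_tendsto_of_tendsto_of_le_of_le tendsto_const_nhds hm
          (fun n => zero_le) hbound
      have hfin : Tendsto (fun n =>
          (∫⁻ x, (‖θn n x - θ x‖₊ : ℝ≥0∞) ^ q ∂μ) ^ (1 / q)) atTop (nhds 0) := by
        have hcont := (ENNReal.continuous_rpow_const (y := 1 / q)).tendsto 0
        rw [ENNReal.zero_rpow_of_pos (by positivity)] at hcont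
        exact hcont.comp hLim
      have heq : ∀ n, eLpNorm (fun x => θn n x - θ x) (ENNReal.ofReal q) μ
          = (∫⁻ x, (‖θn n x - θ x‖₊ : ℝ≥0∞) ^ q ∂μ) ^ (1 / q) := by
        intro n
        rw [eLpNorm_eq_lintegral_rpow_enorm_toReal hne0 hneT, htr]; rfl
      simp_rw [heq]
      exact hfin
    intro q hq1
    rcases le_total 2 q with hq2 | hq2
    · exact key q hq2
    · have h2' := key 2 le_rfl
      have hq0 : (0:ℝ) < q := by linarith
      have hof2 : ENNReal.ofReal q ≤ ENNReal.ofReal 2 := ENNReal.ofReal_le_ofReal hq2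
      have hcne : μ Set.univ ^
          (1 / (ENNReal.ofReal q).toReal - 1 / (ENNReal.ofReal 2).toReal) ≠ ∞ := by
        refine ENNReal.rpow_ne_top_of_nonneg ?_ (measure_ne_top μ _)
        rw [ENNReal.toReal_ofReal hq0.le, ENNReal.toReal_ofReal (by norm_num : (0:ℝ) ≤ 2)]
        rw [sub_nonneg]
        exact one_div_le_one_div_of_le hq0 hq2
      have hup : ∀ n, eLpNorm (fun x => θn n x - θ x) (ENNReal.ofReal q) μ ≤
          eLpNorm (fun x => θn n x - θ x) (ENNReal.ofReal 2) μ *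
            μ Set.univ ^ (1 / (ENNReal.ofReal q).toReal - 1 / (ENNReal.ofReal 2).toReal) :=
        fun n => eLpNorm_le_eLpNorm_mul_rpow_measure_univ hof2
          ((hθnm n).sub hθm).aestronglyMeasurable
      have hm := ENNReal.Tendsto.mul_const h2' (Or.inr hcne)
      rw [zero_mul] at hm
      exact tendsto_of_tendsto_of_tendsto_of_le_of_le tendsto_const_nhds hm
        (fun n => zero_le) hup
  refine ⟨?_, hK⟩
  -- Part 1: ρn → ρ in L^γ
  have hKγ := hK γ hγ
  have hup : ∀ n, eLpNorm (fun x => ρn n x - ρ x) (ENNReal.ofReal γ) μ ≤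
      (‖(1 / cs : ℝ)‖₊ : ℝ≥0∞) *
        eLpNorm (fun x => ρn n x * θn n x - ρ x * θ x) (ENNReal.ofReal γ) μ +
      (‖(R / cs : ℝ)‖₊ : ℝ≥0∞) *
        eLpNorm (fun x => θn n x - θ x) (ENNReal.ofReal γ) μ := by
    intro n
    have step1 : eLpNorm (fun x => ρn n x - ρ x) (ENNReal.ofReal γ) μ ≤
        eLpNorm (fun x => (1 / cs) * |ρn n x * θn n x - ρ x * θ x| +
          (R / cs) * |θn n x - θ x|) (ENNReal.ofReal γ) μ := by
      refine eLpNorm_mono_ae ?_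
      filter_upwards [hρn n, hρ, hθn n] with x h0 hx1 hx2
      rw [Real.norm_eq_abs, Real.norm_eq_abs]
      have hgnn : 0 ≤ (1 / cs) * |ρn n x * θn n x - ρ x * θ x| +
          (R / cs) * |θn n x - θ x| := by positivity
      rw [abs_of_nonneg hgnn]
      have key : (ρn n x - ρ x) * θn n x =
          (ρn n x * θn n x - ρ x * θ x) + ρ x * (θ x - θn n x) := by ring
      have c1 : |ρn n x - ρ x| * cs ≤ |ρn n x - ρ x| * θn n x :=
        mul_le_mul_of_nonneg_left hx2.1 (abs_nonneg _)
      have c2 : |ρn n x - ρ x| * θn n x = |(ρn n x - ρ x) * θn n x| := by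
        rw [abs_mul, abs_of_nonneg (le_trans hcs.le hx2.1)]
      have c3 : |(ρn n x - ρ x) * θn n x| ≤
          |ρn n x * θn n x - ρ x * θ x| + R * |θn n x - θ x| := by
        rw [key]
        refine le_trans (abs_add_le _ _) ?_
        have e : |ρ x * (θ x - θn n x)| = ρ x * |θn n x - θ x| := by
          rw [abs_mul, abs_of_nonneg (le_trans hρlb.le hx1.1), abs_sub_comm]
        rw [e]
        have := mul_le_mul_of_nonneg_right hx1.2 (abs_nonneg (θn n x - θ x))
        linarith
      have final : |ρn n x - ρ x| * cs ≤
          |ρn n x * θn n x - ρ x * θ x| + R * |θn n x - θ x| := by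
        linarith [c1, c2.le, c2.ge, c3]
      rw [show (1 / cs) * |ρn n x * θn n x - ρ x * θ x| + (R / cs) * |θn n x - θ x|
          = (|ρn n x * θn n x - ρ x * θ x| + R * |θn n x - θ x|) / cs by ring,
        le_div_iff₀ hcs]
      exact final
    have meas1 : AEStronglyMeasurable
        (fun x => (1 / cs) * |ρn n x * θn n x - ρ x * θ x|) μ :=
      ((((hρnm n).mul (hθnm n)).sub (hρm.mul hθm)).abs.const_mul _).aestronglyMeasurable
    have meas2 : AEStronglyMeasurable (fun x => (R / cs) * |θn n x - θ x|) μ :=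
      ((((hθnm n).sub hθm)).abs.const_mul _).aestronglyMeasurable
    have step2 := eLpNorm_add_le meas1 meas2 hγ1
    have e1 : eLpNorm (fun x => (1 / cs) * |ρn n x * θn n x - ρ x * θ x|)
        (ENNReal.ofReal γ) μ = (‖(1 / cs : ℝ)‖₊ : ℝ≥0∞) *
          eLpNorm (fun x => ρn n x * θn n x - ρ x * θ x) (ENNReal.ofReal γ) μ := by
      have := eLpNorm_const_smul (1 / cs : ℝ)
        (fun x => |ρn n x * θn n x - ρ x * θ x|) (ENNReal.ofReal γ) μ
      rw [show ((1 / cs : ℝ) • fun x => |ρn n x * θn n x - ρ x * θ x|)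
          = fun x => (1 / cs) * |ρn n x * θn n x - ρ x * θ x| from rfl] at this
      rw [this, show (fun x => |ρn n x * θn n x - ρ x * θ x|)
          = fun x => ‖ρn n x * θn n x - ρ x * θ x‖ from rfl, eLpNorm_norm]; rfl
    have e2 : eLpNorm (fun x => (R / cs) * |θn n x - θ x|)
        (ENNReal.ofReal γ) μ = (‖(R / cs : ℝ)‖₊ : ℝ≥0∞) *
          eLpNorm (fun x => θn n x - θ x) (ENNReal.ofReal γ) μ := by
      have := eLpNorm_const_smul (R / cs : ℝ)
        (fun x => |θn n x - θ x|) (ENNReal.ofReal γ) μ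
      rw [show ((R / cs : ℝ) • fun x => |θn n x - θ x|)
          = fun x => (R / cs) * |θn n x - θ x| from rfl] at this
      rw [this, show (fun x => |θn n x - θ x|)
          = fun x => ‖θn n x - θ x‖ from rfl, eLpNorm_norm]; rfl
    calc eLpNorm (fun x => ρn n x - ρ x) (ENNReal.ofReal γ) μ
        ≤ eLpNorm (fun x => (1 / cs) * |ρn n x * θn n x - ρ x * θ x| +
            (R / cs) * |θn n x - θ x|) (ENNReal.ofReal γ) μ := step1
      _ ≤ eLpNorm (fun x => (1 / cs) * |ρn n x * θn n x - ρ x * θ x|) (ENNReal.ofReal γ) μ +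
            eLpNorm (fun x => (R / cs) * |θn n x - θ x|) (ENNReal.ofReal γ) μ := step2
      _ = _ := by rw [e1, e2]
  have hlim : Tendsto (fun n =>
      (‖(1 / cs : ℝ)‖₊ : ℝ≥0∞) *
        eLpNorm (fun x => ρn n x * θn n x - ρ x * θ x) (ENNReal.ofReal γ) μ +
      (‖(R / cs : ℝ)‖₊ : ℝ≥0∞) *
        eLpNorm (fun x => θn n x - θ x) (ENNReal.ofReal γ) μ) atTop (nhds 0) := by
    have t1 := ENNReal.Tendsto.const_mul (a := (‖(1 / cs : ℝ)‖₊ : ℝ≥0∞)) h1 (Or.inr ENNReal.coe_ne_top)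
    have t2 := ENNReal.Tendsto.const_mul (a := (‖(R / cs : ℝ)‖₊ : ℝ≥0∞)) hKγ (Or.inr ENNReal.coe_ne_top)
    rw [mul_zero] at t1 t2
    simpa using t1.add t2
  exact tendsto_of_tendsto_of_tendsto_of_le_of_le tendsto_const_nhds hlim
    (fun n => zero_le) hup
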